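/- Blow-up for the mechanical ODE, case (B): in the same setting (0 < γ < 1, −1 < δ < γ, ω > 0, U(b) = b^{δ+1}/(δ+1) − b^{γ+1}/(γ+1), ℰ(s) = (ω/2)(b')² + U(b)), if ℰ(0) > U_max and b'(0) < 0, then any nonnegative C² solution of ω b'' + U'(b) ≤ 0 satisfies b'(s) ≤ −√((2/ω)(ℰ(0) − U_max)) for as long as it exists, and hence cannot exist on all of [0, ∞). -/

import Mathlib

open Set


lemma U_le_Umax {p q x : ℝ} (hp : 0 < p) (hpq : p < q) (hx : 0 ≤ x) :
    x ^ p / p - x ^ q / q ≤ 1 / p - 1 / q := by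
  have hq : 0 < q := hp.trans hpq
  set y := x ^ p with hy
  have hy0 : 0 ≤ y := Real.rpow_nonneg hx p
  have hr : 1 ≤ q / p := (one_le_div hp).2 hpq.le
  have hxq : x ^ q = y ^ (q / p) := by
    rw [hy, ← Real.rpow_mul hx]
    congr 1
    field_simp
  have hbern : 1 + (q / p) * (y - 1) ≤ y ^ (q / p) := by
    have := one_add_mul_self_le_rpow_one_add (s := y - 1) (by linarith) hr
    simpa using this
  rw [hxq]
  have hz : p + q * y - q ≤ p * y ^ (q / p) := by
    have h := mul_le_mul_of_nonneg_left hbern hp.le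
    have : p * (1 + q / p * (y - 1)) = p + q * y - q := by field_simp; ring
    linarith [this ▸ h]
  have e1 : y / p - y ^ (q / p) / q - (1 / p - 1 / q)
      = ((q * y - q) - (p * y ^ (q / p) - p)) / (p * q) := by
    field_simp
    ring
  have : ((q * y - q) - (p * y ^ (q / p) - p)) / (p * q) ≤ 0 := by
    apply div_nonpos_of_nonpos_of_nonneg
    · linarith
    · positivity
  linarith [e1 ▸ this]

lemma blowB_aux (γ δ ω : ℝ) (hγ0 : 0 < γ) (hγ1 : γ < 1)
    (hδ1 : -1 < δ) (hδγ : δ < γ) (hω : 0 < ω)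
    (T : ℝ) (b : ℝ → ℝ) (hT : 0 < T)
    (hb : ContDiffOn ℝ 2 b (Ico 0 T))
    (hbnn : ∀ s ∈ Ico (0:ℝ) T, 0 ≤ b s)
    (hode : ∀ s ∈ Ico (0:ℝ) T, ω * deriv (deriv b) s + (b s ^ δ - b s ^ γ) ≤ 0)
    (hE0 : ω / 2 * (deriv b 0) ^ 2
        + (b 0 ^ (δ + 1) / (δ + 1) - b 0 ^ (γ + 1) / (γ + 1))
        > 1 / (δ + 1) - 1 / (γ + 1))
    (hb'0 : deriv b 0 < 0) :
    ∀ s ∈ Ico (0:ℝ) T,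
      deriv b s ≤ -Real.sqrt ((2 / ω) *
        ((ω / 2 * (deriv b 0) ^ 2
          + (b 0 ^ (δ + 1) / (δ + 1) - b 0 ^ (γ + 1) / (γ + 1)))
        - (1 / (δ + 1) - 1 / (γ + 1)))) := by
  have hδ1' : 0 < δ + 1 := by linarith
  have hγ1' : 0 < γ + 1 := by linarith
  have hδγ' : δ + 1 < γ + 1 := by linarith
  set g := deriv b with hgdef
  set E0 := ω / 2 * (g 0) ^ 2 + (b 0 ^ (δ + 1) / (δ + 1) - b 0 ^ (γ + 1) / (γ + 1)) with hE0def
  set M := 1 / (δ + 1) - 1 / (γ + 1) with hMdef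
  set c := Real.sqrt ((2 / ω) * (E0 - M)) with hcdef
  have hEM : 0 < E0 - M := sub_pos.2 hE0
  have hcpos : 0 < c := Real.sqrt_pos.2 (by positivity)
  have hc2 : c ^ 2 = (2 / ω) * (E0 - M) := Real.sq_sqrt (by positivity)
  clear_value E0 M c
  -- differentiability at 0
  have hbd0 : DifferentiableAt ℝ b 0 := by
    by_contra h
    rw [hgdef] at hb'0
    rw [deriv_zero_of_not_differentiableAt h] at hb'0
    exact absurd hb'0 (lt_irrefl 0)
  have hmemIco : ∀ t ∈ Ioo (0:ℝ) T, Ico (0:ℝ) T ∈ nhds t := fun t ht =>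
    Filter.mem_of_superset (Ioo_mem_nhds ht.1 ht.2) Ioo_subset_Ico_self
  have hdb : ∀ t ∈ Ioo (0:ℝ) T, DifferentiableAt ℝ b t := fun t ht =>
    (hb.contDiffAt (hmemIco t ht)).differentiableAt (by norm_num)
  -- the derivative of g on the interior
  have hg1 : ContDiffOn ℝ 1 g (Ioo 0 T) :=
    (hb.mono Ioo_subset_Ico_self).deriv_of_isOpen isOpen_Ioo (by norm_num)
  have hgd : ∀ t ∈ Ioo (0:ℝ) T, HasDerivAt g (deriv g t) t := fun t ht =>
    (((hg1.differentiableOn (by norm_num)).differentiableAt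
      (isOpen_Ioo.mem_nhds ht))).hasDerivAt
  -- continuity of g on Ico 0 T
  have hUD : UniqueDiffOn ℝ (Ico (0:ℝ) T) := uniqueDiffOn_Ico 0 T
  have hgeq : ∀ t ∈ Ico (0:ℝ) T, derivWithin b (Ico 0 T) t = g t := by
    intro t ht
    rcases eq_or_lt_of_le ht.1 with h0 | h0
    · rw [← h0]
      exact hbd0.derivWithin (hUD 0 ⟨le_refl 0, hT⟩)
    · exact derivWithin_of_mem_nhds (hmemIco t ⟨h0, ht.2⟩)
  have hgc : ContinuousOn g (Ico 0 T) :=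
    (hb.continuousOn_derivWithin hUD (by norm_num)).congr fun t ht => (hgeq t ht).symm
  -- key energy lemma
  have key : ∀ s ∈ Ico (0:ℝ) T, (∀ t ∈ Icc (0:ℝ) s, g t < 0) → g s ≤ -c := by
    intro s hs hneg
    have hbs0 : 0 ≤ b s := hbnn s hs
    have hEmono : E0 ≤ ω / 2 * (g s) ^ 2
        + (b s ^ (δ + 1) / (δ + 1) - b s ^ (γ + 1) / (γ + 1)) := by
      rcases eq_or_lt_of_le hs.1 with h0 | h0
      · rw [← h0]; exact le_of_eq hE0def
      · -- s > 0 : energy is nondecreasing on [0, s]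
        set En := fun t => ω / 2 * (g t) ^ 2
          + ((b t) ^ (δ + 1) / (δ + 1) - (b t) ^ (γ + 1) / (γ + 1)) with hEn
        have hIccsub : Icc (0:ℝ) s ⊆ Ico 0 T := fun t ht => ⟨ht.1, lt_of_le_of_lt ht.2 hs.2⟩
        have hIoosub : Ioo (0:ℝ) s ⊆ Ioo 0 T := fun t ht => ⟨ht.1, lt_trans ht.2 hs.2⟩
        have hbc : ContinuousOn b (Icc 0 s) := hb.continuousOn.mono hIccsub
        have hanti : StrictAntiOn b (Icc 0 s) := by
          apply strictAntiOn_of_deriv_neg (convex_Icc 0 s) hbc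
          intro x hx
          rw [interior_Icc] at hx
          exact hneg x ⟨hx.1.le, hx.2.le⟩
        have hbpos : ∀ t ∈ Ioo (0:ℝ) s, 0 < b t := by
          intro t ht
          have h1 : b s < b t := hanti ⟨ht.1.le, ht.2.le⟩ ⟨h0.le, le_refl s⟩ ht.2
          have h2 : 0 ≤ b s := hbnn s hs
          linarith
        -- derivative of the energy
        have hED : ∀ t ∈ Ioo (0:ℝ) s, HasDerivAt En
            (ω / 2 * (2 * g t ^ 1 * deriv g t)
              + (((δ + 1) * b t ^ δ * g t) / (δ + 1) - ((γ + 1) * b t ^ γ * g t) / (γ + 1))) t := by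
          intro t ht
          have htT : t ∈ Ioo (0:ℝ) T := hIoosub ht
          have hbt : HasDerivAt b (g t) t := (hdb t htT).hasDerivAt
          have hgt : HasDerivAt g (deriv g t) t := hgd t htT
          have hbtpos : b t ≠ 0 := (hbpos t ht).ne'
          have h2 : HasDerivAt (fun u => b u ^ (δ + 1)) ((δ + 1) * b t ^ δ * g t) t := by
            have := ((Real.hasStrictDerivAt_rpow_const (x := b t) (p := δ + 1)
              (Or.inl hbtpos)).hasDerivAt).comp t hbt
            simpa [add_sub_cancel_right, mul_assoc, Function.comp_def] using this
          have h3 : HasDerivAt (fun u => b u ^ (γ + 1)) ((γ + 1) * b t ^ γ * g t) t := by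
            have := ((Real.hasStrictDerivAt_rpow_const (x := b t) (p := γ + 1)
              (Or.inl hbtpos)).hasDerivAt).comp t hbt
            simpa [add_sub_cancel_right, mul_assoc, Function.comp_def] using this
          exact ((hgt.pow 2).const_mul (ω / 2)).add ((h2.div_const (δ + 1)).sub (h3.div_const (γ + 1)))
        have hEDnn : ∀ t ∈ Ioo (0:ℝ) s,
            0 ≤ ω / 2 * (2 * g t ^ 1 * deriv g t)
              + (((δ + 1) * b t ^ δ * g t) / (δ + 1) - ((γ + 1) * b t ^ γ * g t) / (γ + 1)) := by
          intro t ht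
          have hX := hode t (hIccsub ⟨ht.1.le, ht.2.le⟩)
          have hgt0 : g t < 0 := hneg t ⟨ht.1.le, ht.2.le⟩
          have e : ω / 2 * (2 * g t ^ 1 * deriv g t)
              + (((δ + 1) * b t ^ δ * g t) / (δ + 1) - ((γ + 1) * b t ^ γ * g t) / (γ + 1))
              = g t * (ω * deriv g t + (b t ^ δ - b t ^ γ)) := by
            field_simp
          rw [e]
          nlinarith [mul_nonneg (neg_nonneg.2 hgt0.le) (neg_nonneg.2 hX)]
        have hEcont : ContinuousOn En (Icc 0 s) := by
          apply ContinuousOn.add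
          · exact continuousOn_const.mul ((hgc.mono hIccsub).pow 2)
          · exact ((hbc.rpow_const fun x _ => Or.inr hδ1'.le).div_const _).sub
              ((hbc.rpow_const fun x _ => Or.inr hγ1'.le).div_const _)
        have hmono : MonotoneOn En (Icc 0 s) := by
          apply monotoneOn_of_deriv_nonneg (convex_Icc 0 s) hEcont
          · rw [interior_Icc]
            exact fun t ht => ((hED t ht).differentiableAt).differentiableWithinAt
          · rw [interior_Icc]
            intro t ht
            rw [(hED t ht).deriv]
            exact hEDnn t ht
        have h01 := hmono ⟨le_refl 0, h0.le⟩ ⟨h0.le, le_refl s⟩ h0.le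
        rw [hE0def]
        exact h01
    -- from energy bound to velocity bound
    have hU : b s ^ (δ + 1) / (δ + 1) - b s ^ (γ + 1) / (γ + 1) ≤ M :=
      hMdef ▸ U_le_Umax hδ1' hδγ' hbs0
    have hgs2 : c ^ 2 ≤ g s ^ 2 := by
      rw [hc2]
      have hEs : E0 - M ≤ ω / 2 * g s ^ 2 := by linarith
      rw [div_mul_eq_mul_div, div_le_iff₀ hω]
      nlinarith
    have hgs0 : g s < 0 := hneg s ⟨hs.1, le_refl s⟩
    have : c ≤ -g s := by
      have h1 : c ^ 2 ≤ (-g s) ^ 2 := by rw [neg_pow]; simpa using hgs2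
      nlinarith
    linarith
  -- continuity / connectedness argument: g < 0 everywhere on [0, T)
  have hneg : ∀ t ∈ Ico (0:ℝ) T, g t < 0 := by
    by_contra h
    push_neg at h
    obtain ⟨u, hu, hgu⟩ := h
    set N := {t : ℝ | t ∈ Icc (0:ℝ) u ∧ 0 ≤ g t} with hN
    have hNne : N.Nonempty := ⟨u, ⟨hu.1, le_refl u⟩, hgu⟩
    have hNbdd : BddBelow N := ⟨0, fun t ht => ht.1.1⟩
    have hIccu : Icc (0:ℝ) u ⊆ Ico 0 T := fun t ht => ⟨ht.1, lt_of_le_of_lt ht.2 hu.2⟩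
    have hNclosed : IsClosed N := by
      have : N = Icc (0:ℝ) u ∩ g ⁻¹' (Ici 0) := by ext t; simp [hN, and_comm]
      rw [this]
      exact (hgc.mono hIccu).preimage_isClosed_of_isClosed isClosed_Icc isClosed_Ici
    set t₀ := sInf N with ht₀def
    have ht₀N : t₀ ∈ N := hNclosed.csInf_mem hNne hNbdd
    have ht₀pos : 0 < t₀ := by
      rcases lt_or_eq_of_le ht₀N.1.1 with h' | h'
      · exact h'
      · exact absurd ht₀N.2 (not_le.2 (show g t₀ < 0 by rw [← h']; exact hb'0))
    have hlt : ∀ t ∈ Ico (0:ℝ) t₀, g t ≤ -c := by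
      intro t ht
      have htmem : t ∈ Ico (0:ℝ) T := ⟨ht.1, lt_of_lt_of_le ht.2 (ht₀N.1.2.trans hu.2.le)⟩
      apply key t htmem
      intro r hr
      have hrt : r < t₀ := lt_of_le_of_lt hr.2 ht.2
      by_contra hge
      push_neg at hge
      have : r ∈ N := ⟨⟨hr.1, hrt.le.trans ht₀N.1.2⟩, hge⟩
      exact absurd (csInf_le hNbdd this) (not_le.2 hrt)
    -- pass to the limit t → t₀⁻
    have hcont : ContinuousWithinAt g (Ioo 0 t₀) t₀ :=
      ((hgc t₀ (hIccu ht₀N.1)).mono (fun r hr => hIccu ⟨hr.1.le, hr.2.le.trans ht₀N.1.2⟩))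
    have hlim : g t₀ ≤ -c := by
      have hne : (nhdsWithin t₀ (Ioo 0 t₀)).NeBot := right_nhdsWithin_Ioo_neBot ht₀pos
      exact le_of_tendsto hcont
        (Filter.eventually_of_mem self_mem_nhdsWithin fun r hr => hlt r ⟨hr.1.le, hr.2⟩)
    linarith [ht₀N.2, hcpos, hlim]
  intro s hs
  exact key s hs fun t ht => hneg t ⟨ht.1, lt_of_le_of_lt ht.2 hs.2⟩


theorem mechanical_blowup_B (γ δ ω : ℝ) (hγ0 : 0 < γ) (hγ1 : γ < 1)
    (hδ1 : -1 < δ) (hδγ : δ < γ) (hω : 0 < ω) :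
    (∀ (T : ℝ) (b : ℝ → ℝ), 0 < T →
      ContDiffOn ℝ 2 b (Ico 0 T) →
      (∀ s ∈ Ico (0 : ℝ) T, 0 ≤ b s) →
      (∀ s ∈ Ico (0 : ℝ) T,
        ω * deriv (deriv b) s + (b s ^ δ - b s ^ γ) ≤ 0) →
      (ω / 2 * (deriv b 0) ^ 2
          + (b 0 ^ (δ + 1) / (δ + 1) - b 0 ^ (γ + 1) / (γ + 1))
          > 1 / (δ + 1) - 1 / (γ + 1)) →
      deriv b 0 < 0 →
      ∀ s ∈ Ico (0 : ℝ) T,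
        deriv b s ≤ -Real.sqrt ((2 / ω) *
          ((ω / 2 * (deriv b 0) ^ 2
            + (b 0 ^ (δ + 1) / (δ + 1) - b 0 ^ (γ + 1) / (γ + 1)))
          - (1 / (δ + 1) - 1 / (γ + 1))))) ∧
    (∀ b : ℝ → ℝ,
      ContDiffOn ℝ 2 b (Ici 0) →
      (∀ s ∈ Ici (0 : ℝ), 0 ≤ b s) →
      (∀ s ∈ Ici (0 : ℝ),
        ω * deriv (deriv b) s + (b s ^ δ - b s ^ γ) ≤ 0) →
      (ω / 2 * (deriv b 0) ^ 2
          + (b 0 ^ (δ + 1) / (δ + 1) - b 0 ^ (γ + 1) / (γ + 1))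
          > 1 / (δ + 1) - 1 / (γ + 1)) →
      deriv b 0 < 0 → False) := by
  constructor
  · exact fun T b hT hb hbnn hode hE0 hb'0 =>
      blowB_aux γ δ ω hγ0 hγ1 hδ1 hδγ hω T b hT hb hbnn hode hE0 hb'0
  · intro b hb hbnn hode hE0 hb'0
    have hδ1' : 0 < δ + 1 := by linarith
    have hγ1' : 0 < γ + 1 := by linarith
    set c := Real.sqrt ((2 / ω) *
      ((ω / 2 * (deriv b 0) ^ 2
        + (b 0 ^ (δ + 1) / (δ + 1) - b 0 ^ (γ + 1) / (γ + 1)))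
      - (1 / (δ + 1) - 1 / (γ + 1)))) with hcdef
    have hcpos : 0 < c := by
      rw [hcdef]
      apply Real.sqrt_pos.2
      have : 0 < (ω / 2 * (deriv b 0) ^ 2
        + (b 0 ^ (δ + 1) / (δ + 1) - b 0 ^ (γ + 1) / (γ + 1)))
        - (1 / (δ + 1) - 1 / (γ + 1)) := by linarith
      positivity
    have hall : ∀ s : ℝ, 0 ≤ s → deriv b s ≤ -c := by
      intro s hs
      exact blowB_aux γ δ ω hγ0 hγ1 hδ1 hδγ hω (s + 1) b (by linarith)
        (hb.mono Ico_subset_Ici_self) (fun t ht => hbnn t ht.1) (fun t ht => hode t ht.1)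
        hE0 hb'0 s ⟨hs, by linarith⟩
    have hdbt : ∀ t ∈ Ioi (0:ℝ), DifferentiableAt ℝ b t := fun t ht =>
      (hb.contDiffAt (Filter.mem_of_superset (Ioi_mem_nhds ht) Ioi_subset_Ici_self)).differentiableAt
        (by norm_num)
    set f := fun s : ℝ => b s + c * s with hfdef
    have hfD : ∀ t ∈ Ioi (0:ℝ), HasDerivAt f (deriv b t + c) t := by
      intro t ht
      have h1 : HasDerivAt (fun x : ℝ => c * x) c t := by
        simpa using (hasDerivAt_id t).const_mul c
      exact ((hdbt t ht).hasDerivAt).add h1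
    have hfc : ContinuousOn f (Ici 0) :=
      hb.continuousOn.add (continuous_const.mul continuous_id).continuousOn
    have hmono : AntitoneOn f (Ici 0) := by
      apply antitoneOn_of_deriv_nonpos (convex_Ici 0) hfc
      · rw [interior_Ici]
        exact fun t ht => ((hfD t ht).differentiableAt).differentiableWithinAt
      · rw [interior_Ici]
        intro t ht
        rw [(hfD t ht).deriv]
        linarith [hall t (le_of_lt ht)]
    have hs' : (0:ℝ) ≤ b 0 / c + 1 := by
      have hb00 : 0 ≤ b 0 := hbnn 0 self_mem_Ici
      positivity
    have h2 := hmono self_mem_Ici hs' hs'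
    have hcb : c * (b 0 / c) = b 0 := by field_simp
    have hbs' : 0 ≤ b (b 0 / c + 1) := hbnn _ hs'
    simp only [hfdef] at h2
    nlinarith [h2, hcb]
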